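/- If B is a nontrivial subloop of a Cayley-Dickson loop Q_n and x ∈ Q_n \ B, then the subloop generated by B and x has order exactly 2|B|. -/

import Mathlib

/-- The underlying set of the Cayley-Dickson loop `Q n`:
`Q 0 = {±1}` (encoded as `Bool`, `false = 1`, `true = -1`) and `Q (n+1) = Q n × Bool`,
an element `(x, b)` encoding `(x, 0)` if `b = false` and `(x, 1)` if `b = true`. -/
def Q : ℕ → Type
  | 0 => Bool
  | n+1 => Q n × Bool

namespace Q

def one : ∀ n, Q n
  | 0 => false
  | n+1 => (one n, false)

def neg : ∀ n, Q n → Q n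
  | 0, x => !x
  | n+1, (x, b) => (neg n x, b)

def conj : ∀ n, Q n → Q n
  | 0, x => x
  | n+1, (x, false) => (conj n x, false)
  | n+1, (x, true) => (neg n x, true)

/-- Cayley-Dickson doubling multiplication restricted to the loop:
`(x,0)(y,0) = (xy,0)`, `(x,0)(y,1) = (yx,1)`, `(x,1)(y,0) = (xy*,1)`, `(x,1)(y,1) = (-y*x,0)`. -/
def mul : ∀ n, Q n → Q n → Q n
  | 0, x, y => xor x y
  | n+1, (x, false), (y, false) => (mul n x y, false)
  | n+1, (x, false), (y, true)  => (mul n y x, true)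
  | n+1, (x, true),  (y, false) => (mul n x (conj n y), true)
  | n+1, (x, true),  (y, true)  => (neg n (mul n (conj n y) x), false)

instance (n : ℕ) : One (Q n) := ⟨one n⟩
instance (n : ℕ) : Neg (Q n) := ⟨neg n⟩
instance (n : ℕ) : Mul (Q n) := ⟨mul n⟩
instance (n : ℕ) : Star (Q n) := ⟨conj n⟩
/-- In `Q n` the inverse of `x` is its conjugate `x*`. -/
instance (n : ℕ) : Inv (Q n) := ⟨conj n⟩

instance instDecEq : ∀ n, DecidableEq (Q n)
  | 0 => inferInstanceAs (DecidableEq Bool)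
  | n+1 => letI := instDecEq n; inferInstanceAs (DecidableEq (Q n × Bool))

instance instFintype : ∀ n, Fintype (Q n)
  | 0 => inferInstanceAs (Fintype Bool)
  | n+1 => letI := instFintype n; inferInstanceAs (Fintype (Q n × Bool))

/-- Powers in `Q n` (well defined by diassociativity). -/
def pow {n : ℕ} (x : Q n) : ℕ → Q n
  | 0 => 1
  | k+1 => x * pow x k

/-- The embedding `x ↦ (x, 0)` of `Q n` into `Q (n+1)`. -/
def up {n : ℕ} (x : Q n) : Q (n+1) := (x, false)

/-- The map `x ↦ (x, 1)` from `Q n` into `Q (n+1)`. -/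
def up1 {n : ℕ} (x : Q n) : Q (n+1) := (x, true)

/-- The commutator `[x,y]`, defined by `xy = (yx)[x,y]`. -/
def comm {n : ℕ} (x y : Q n) : Q n := (y * x)⁻¹ * (x * y)

/-- The associator `[x,y,z]`, defined by `(xy)z = (x(yz))[x,y,z]`. -/
def assoc {n : ℕ} (x y z : Q n) : Q n := (x * (y * z))⁻¹ * ((x * y) * z)

/-- A subloop of the Cayley-Dickson loop `Q n`: a subset containing `1` and closed
under multiplication and inverses (= conjugates). -/
structure Subloop (n : ℕ) where
  carrier : Set (Q n)
  one_mem : (1 : Q n) ∈ carrier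
  mul_mem : ∀ ⦃x y : Q n⦄, x ∈ carrier → y ∈ carrier → x * y ∈ carrier
  inv_mem : ∀ ⦃x : Q n⦄, x ∈ carrier → x⁻¹ ∈ carrier

/-- The subloop of `Q n` generated by a set `s`. -/
def closure (n : ℕ) (s : Set (Q n)) : Set (Q n) :=
  ⋂₀ {t : Set (Q n) | s ⊆ t ∧ (1 : Q n) ∈ t ∧
      (∀ x ∈ t, ∀ y ∈ t, x * y ∈ t) ∧ (∀ x ∈ t, x⁻¹ ∈ t)}

end Q

namespace Q

theorem neg_neg : ∀ n, ∀ a : Q n, neg n (neg n a) = a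
  | 0, a => by cases a <;> rfl
  | n+1, (a, b) => by simp [neg, neg_neg n a] <;> rfl

theorem neg_ne : ∀ n, ∀ a : Q n, neg n a ≠ a
  | 0, a => by cases a <;> simp [neg] <;> exact fun h => Bool.noConfusion h
  | n+1, (a, b) => fun h => neg_ne n a (congrArg Prod.fst h)

theorem conj_one : ∀ n, conj n (one n) = one n
  | 0 => rfl
  | n+1 => by simp [one, conj, conj_one n] <;> rfl

theorem conj_neg : ∀ n, ∀ a : Q n, conj n (neg n a) = neg n (conj n a)
  | 0, a => rfl
  | n+1, (a, false) => by simp [neg, conj, conj_neg n a] <;> rfl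
  | n+1, (a, true) => by simp [neg, conj] <;> rfl

theorem conj_conj : ∀ n, ∀ a : Q n, conj n (conj n a) = a
  | 0, a => rfl
  | n+1, (a, false) => by simp [conj, conj_conj n a] <;> rfl
  | n+1, (a, true) => by simp [conj, neg_neg n a] <;> rfl

theorem mul_one : ∀ n, ∀ a : Q n, mul n a (one n) = a
  | 0, a => by cases a <;> rfl
  | n+1, (a, false) => by simp [one, mul, mul_one n a] <;> rfl
  | n+1, (a, true) => by simp [one, mul, conj_one n, mul_one n a] <;> rfl

theorem one_mul : ∀ n, ∀ a : Q n, mul n (one n) a = a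
  | 0, a => by cases a <;> rfl
  | n+1, (a, false) => by simp [one, mul, one_mul n a] <;> rfl
  | n+1, (a, true) => by simp [one, mul, mul_one n a] <;> rfl

theorem mul_neg : ∀ n, ∀ a b : Q n,
    mul n (neg n a) b = neg n (mul n a b) ∧ mul n a (neg n b) = neg n (mul n a b)
  | 0, a, b => by cases a <;> cases b <;> constructor <;> rfl
  | n+1, (x, false), (y, false) => by
      simp [neg, mul, (mul_neg n x y).1, (mul_neg n x y).2] <;> rfl
  | n+1, (x, false), (y, true) => by
      simp [neg, mul, (mul_neg n y x).1, (mul_neg n y x).2] <;> rfl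
  | n+1, (x, true), (y, false) => by
      simp [neg, mul, conj_neg n y, (mul_neg n x (conj n y)).1, (mul_neg n x (conj n y)).2] <;> rfl
  | n+1, (x, true), (y, true) => by
      simp [neg, mul, conj_neg n y, (mul_neg n (conj n y) x).1, (mul_neg n (conj n y) x).2,
        neg_neg] <;> rfl

theorem mul_neg_left (n : ℕ) (a b : Q n) : mul n (neg n a) b = neg n (mul n a b) :=
  (mul_neg n a b).1
theorem mul_neg_right (n : ℕ) (a b : Q n) : mul n a (neg n b) = neg n (mul n a b) :=
  (mul_neg n a b).2

theorem conj_mul : ∀ n, ∀ a b : Q n, conj n (mul n a b) = mul n (conj n b) (conj n a)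
  | 0, a, b => by cases a <;> cases b <;> rfl
  | n+1, (x, false), (y, false) => by simp [mul, conj, conj_mul n x y] <;> rfl
  | n+1, (x, false), (y, true) => by
      simp [mul, conj, conj_mul n y x, conj_conj, mul_neg_left] <;> rfl
  | n+1, (x, true), (y, false) => by
      simp [mul, conj, mul_neg_left] <;> rfl
  | n+1, (x, true), (y, true) => by
      simp [mul, conj, conj_neg, conj_mul n (conj n y) x, conj_conj, mul_neg_left,
        mul_neg_right, neg_neg] <;> rfl

theorem conj_sign : ∀ n, ∀ a : Q n, conj n a = a ∨ conj n a = neg n a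
  | 0, a => Or.inl rfl
  | n+1, (x, false) => by
      rcases conj_sign n x with h | h
      · exact Or.inl (by simp [conj, h] <;> rfl)
      · exact Or.inr (by simp [conj, neg, h] <;> rfl)
  | n+1, (x, true) => Or.inr (by simp [conj, neg] <;> rfl)

theorem mul_conj : ∀ n, ∀ a : Q n,
    mul n a (conj n a) = one n ∧ mul n (conj n a) a = one n
  | 0, a => by cases a <;> constructor <;> rfl
  | n+1, (x, false) => by
      simp [mul, conj, one, (mul_conj n x).1, (mul_conj n x).2] <;> rfl
  | n+1, (x, true) => by
      simp [mul, conj, one, conj_neg, mul_neg_left, mul_neg_right, neg_neg,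
        (mul_conj n x).1, (mul_conj n x).2] <;> rfl

theorem sq : ∀ n, ∀ a : Q n, mul n a a = one n ∨ mul n a a = neg n (one n)
  | 0, a => Or.inl (by cases a <;> rfl)
  | n+1, (x, false) => by
      rcases sq n x with h | h
      · exact Or.inl (by simp [mul, one, h] <;> rfl)
      · exact Or.inr (by simp [mul, one, neg, h] <;> rfl)
  | n+1, (x, true) => Or.inr (by simp [mul, one, neg, (mul_conj n x).2] <;> rfl)

theorem sq_eq_one : ∀ n, ∀ a : Q n,
    mul n a a = one n → a = one n ∨ a = neg n (one n)
  | 0, a => by cases a <;> simp [mul, one, neg] <;> exact fun _ => rfl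
  | n+1, (x, false) => by
      intro h
      have hx : mul n x x = one n := congrArg Prod.fst h
      rcases sq_eq_one n x hx with h' | h'
      · exact Or.inl (by simp [one, h'] <;> rfl)
      · exact Or.inr (by simp [one, neg, h'] <;> rfl)
  | n+1, (x, true) => by
      intro h
      have hx : neg n (mul n (conj n x) x) = one n := congrArg Prod.fst h
      rw [(mul_conj n x).2] at hx
      exact absurd hx (neg_ne n (one n))
def pm (n : ℕ) (a b : Q n) : Prop := a = b ∨ a = neg n b

theorem pm_refl {n : ℕ} (a : Q n) : pm n a a := Or.inl rfl

theorem pm_symm {n : ℕ} {a b : Q n} (h : pm n a b) : pm n b a := by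
  rcases h with h | h
  · exact Or.inl h.symm
  · exact Or.inr (by rw [h, neg_neg])

theorem pm_trans {n : ℕ} {a b c : Q n} (h1 : pm n a b) (h2 : pm n b c) : pm n a c := by
  rcases h1 with h1 | h1 <;> rcases h2 with h2 | h2 <;>
    simp [pm, h1, h2, neg_neg]

theorem pm_neg_congr {n : ℕ} {a b : Q n} (h : pm n a b) : pm n (neg n a) (neg n b) := by
  rcases h with h | h
  · exact Or.inl (by rw [h])
  · exact Or.inr (by rw [h])

theorem pm_mul_left {n : ℕ} {a b c : Q n} (h : pm n b c) : pm n (mul n a b) (mul n a c) := by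
  rcases h with h | h
  · exact Or.inl (by rw [h])
  · exact Or.inr (by rw [h, mul_neg_right])

theorem pm_mul_right {n : ℕ} {a b c : Q n} (h : pm n a b) : pm n (mul n a c) (mul n b c) := by
  rcases h with h | h
  · exact Or.inl (by rw [h])
  · exact Or.inr (by rw [h, mul_neg_left])

theorem comm_pm (n : ℕ) (a b : Q n) : pm n (mul n a b) (mul n b a) := by
  have h1 : pm n (mul n a b) (conj n (mul n a b)) := pm_symm (conj_sign n (mul n a b))
  rw [conj_mul] at h1
  exact pm_trans h1 (pm_trans (pm_mul_right (conj_sign n b)) (pm_mul_left (conj_sign n a)))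

theorem pm_pair {n : ℕ} {u v : Q n} (s : Bool) (h : pm n u v) : pm (n+1) (u, s) (v, s) := by
  rcases h with h | h
  · exact Or.inl (by rw [h])
  · exact Or.inr (by rw [h]; rfl)

theorem assoc_pm : ∀ n, ∀ a b c : Q n, pm n (mul n (mul n a b) c) (mul n a (mul n b c))
  | 0, a, b, c => Or.inl (by cases a <;> cases b <;> cases c <;> rfl)
  | n+1, (x, false), (y, false), (z, false) =>
      pm_pair _ (assoc_pm n x y z)
  | n+1, (x, false), (y, false), (z, true) =>
      pm_pair _ (pm_trans (pm_mul_left (comm_pm n x y)) (pm_symm (assoc_pm n z y x)))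
  | n+1, (x, false), (y, true), (z, false) =>
      pm_pair _ (pm_trans (pm_trans (assoc_pm n y x (conj n z))
        (pm_mul_left (comm_pm n x (conj n z)))) (pm_symm (assoc_pm n y (conj n z) x)))
  | n+1, (x, false), (y, true), (z, true) => by
      show pm (n+1) (neg n (mul n (conj n z) (mul n y x)), false)
        (mul n x (neg n (mul n (conj n z) y)), false)
      rw [mul_neg_right]
      exact pm_pair _ (pm_neg_congr (pm_trans (pm_symm (assoc_pm n (conj n z) y x))
        (comm_pm n (mul n (conj n z) y) x)))
  | n+1, (x, true), (y, false), (z, false) => by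
      show pm (n+1) (mul n (mul n x (conj n y)) (conj n z), true)
        (mul n x (conj n (mul n y z)), true)
      rw [conj_mul]
      exact pm_pair _ (pm_trans (assoc_pm n x (conj n y) (conj n z))
        (pm_mul_left (comm_pm n (conj n y) (conj n z))))
  | n+1, (x, true), (y, false), (z, true) => by
      show pm (n+1) (neg n (mul n (conj n z) (mul n x (conj n y))), false)
        (neg n (mul n (conj n (mul n z y)) x), false)
      rw [conj_mul]
      refine pm_pair _ (pm_neg_congr ?_)
      exact pm_trans (pm_trans (pm_symm (assoc_pm n (conj n z) x (conj n y)))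
        (comm_pm n (mul n (conj n z) x) (conj n y)))
        (pm_symm (assoc_pm n (conj n y) (conj n z) x))
  | n+1, (x, true), (y, true), (z, false) => by
      show pm (n+1) (mul n (neg n (mul n (conj n y) x)) z, false)
        (neg n (mul n (conj n (mul n y (conj n z))) x), false)
      rw [mul_neg_left, conj_mul, conj_conj]
      refine pm_pair _ (pm_neg_congr ?_)
      exact pm_trans (pm_trans (pm_trans (assoc_pm n (conj n y) x z)
        (pm_mul_left (comm_pm n x z))) (pm_symm (assoc_pm n (conj n y) z x)))
        (pm_mul_right (comm_pm n (conj n y) z))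
  | n+1, (x, true), (y, true), (z, true) => by
      show pm (n+1) (mul n z (neg n (mul n (conj n y) x)), true)
        (mul n x (conj n (neg n (mul n (conj n z) y))), true)
      rw [mul_neg_right, conj_neg, conj_mul, conj_conj, mul_neg_right]
      refine pm_pair _ (pm_neg_congr ?_)
      exact pm_trans (pm_trans (pm_symm (assoc_pm n z (conj n y) x))
        (comm_pm n (mul n z (conj n y)) x))
        (pm_mul_left (comm_pm n z (conj n y)))

theorem mul_left_cancel {n : ℕ} {a b c : Q n} (h : mul n a b = mul n a c) : b = c := by
  have key : ∀ d : Q n, pm n d (mul n (conj n a) (mul n a d)) := fun d => by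
    have h1 := assoc_pm n (conj n a) a d
    rw [(mul_conj n a).2, one_mul] at h1
    exact h1
  have hbc : pm n b c := pm_trans (key b) (pm_trans (by rw [h]; exact pm_refl _)
    (pm_symm (key c)))
  rcases hbc with h' | h'
  · exact h'
  · exfalso
    rw [h', mul_neg_right n a c] at h
    exact neg_ne n (mul n a c) h

theorem mul_right_cancel {n : ℕ} {a b c : Q n} (h : mul n a c = mul n b c) : a = b := by
  have key : ∀ d : Q n, pm n d (mul n (mul n d c) (conj n c)) := fun d => by
    have h1 := assoc_pm n d c (conj n c)
    rw [(mul_conj n c).1, mul_one] at h1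
    exact pm_symm h1
  have hab : pm n a b := pm_trans (key a) (pm_trans (by rw [h]; exact pm_refl _)
    (pm_symm (key b)))
  rcases hab with h' | h'
  · exact h'
  · exfalso
    rw [h', mul_neg_left n b c] at h
    exact neg_ne n (mul n b c) h

end Q

/-- If `B` is a nontrivial subloop of `Q n` and `x ∈ Q n \ B`, then the subloop
generated by `B` and `x` has order exactly `2|B|`. -/
theorem Q.closure_insert_card (n : ℕ) (B : Q.Subloop n) (hB : B.carrier ≠ {1})
    (x : Q n) (hx : x ∉ B.carrier) :
    (Q.closure n (B.carrier ∪ {x})).ncard = 2 * B.carrier.ncard := by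
  classical
  have h1B : (1 : Q n) ∈ B.carrier := B.one_mem
  obtain ⟨a, haB, ha1⟩ : ∃ a ∈ B.carrier, a ≠ (1 : Q n) := by
    by_contra h
    push_neg at h
    exact hB (Set.eq_singleton_iff_unique_mem.2 ⟨h1B, h⟩)
  have hm1 : Q.neg n (Q.one n) ∈ B.carrier := by
    rcases Q.sq n a with h | h
    · rcases Q.sq_eq_one n a h with h' | h'
      · exact absurd h' ha1
      · rw [← h']; exact haB
    · have hsq : Q.mul n a a ∈ B.carrier := B.mul_mem haB haB
      rw [h] at hsq
      exact hsq
  have hnegmem : ∀ c ∈ B.carrier, Q.neg n c ∈ B.carrier := fun c hc => by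
    have h2 : Q.mul n (Q.neg n (Q.one n)) c ∈ B.carrier := B.mul_mem hm1 hc
    rwa [Q.mul_neg_left, Q.one_mul] at h2
  have hpm_mem : ∀ a b : Q n, Q.pm n a b → b ∈ B.carrier → a ∈ B.carrier := by
    intro a b hab hb
    rcases hab with h | h
    · rwa [h]
    · rw [h]; exact hnegmem b hb
  have hinvmem : ∀ c ∈ B.carrier, Q.conj n c ∈ B.carrier := fun c hc => B.inv_mem hc
  set S : Set (Q n) := B.carrier ∪ (fun b => Q.mul n b x) '' B.carrier with hSdef
  have himg : ∀ (a c : Q n), c ∈ B.carrier → Q.pm n a (Q.mul n c x) →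
      a ∈ (fun b => Q.mul n b x) '' B.carrier := by
    intro a c hc h
    rcases h with h | h
    · exact ⟨c, hc, h.symm⟩
    · exact ⟨Q.neg n c, hnegmem c hc, by show Q.mul n (Q.neg n c) x = a; rw [Q.mul_neg_left]; exact h.symm⟩
  have hSmul : ∀ p ∈ S, ∀ q ∈ S, Q.mul n p q ∈ S := by
    rintro p (hp | ⟨b, hb, rfl⟩) q (hq | ⟨c, hc, rfl⟩)
    · exact Or.inl (B.mul_mem hp hq)
    · exact Or.inr (himg _ (Q.mul n p c) (B.mul_mem hp hc)
        (Q.pm_symm (Q.assoc_pm n p c x)))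
    · exact Or.inr (himg _ (Q.mul n b q) (B.mul_mem hb hq)
        (Q.pm_trans (Q.assoc_pm n b x q)
          (Q.pm_trans (Q.pm_mul_left (Q.comm_pm n x q)) (Q.pm_symm (Q.assoc_pm n b q x)))))
    · refine Or.inl (hpm_mem _ (Q.mul n b c) ?_ (B.mul_mem hb hc))
      have h1 : Q.pm n (Q.mul n (Q.mul n b x) (Q.mul n c x))
          (Q.mul n (Q.mul n (Q.mul n b x) c) x) := Q.pm_symm (Q.assoc_pm n (Q.mul n b x) c x)
      have h2 : Q.pm n (Q.mul n (Q.mul n b x) c) (Q.mul n (Q.mul n b c) x) :=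
        Q.pm_trans (Q.assoc_pm n b x c)
          (Q.pm_trans (Q.pm_mul_left (Q.comm_pm n x c)) (Q.pm_symm (Q.assoc_pm n b c x)))
      have h3 : Q.pm n (Q.mul n (Q.mul n (Q.mul n b c) x) x) (Q.mul n b c) := by
        have h4 := Q.assoc_pm n (Q.mul n b c) x x
        rcases Q.sq n x with hs | hs
        · rw [hs, Q.mul_one] at h4; exact h4
        · rw [hs, Q.mul_neg_right, Q.mul_one] at h4
          exact Q.pm_trans h4 (Or.inr rfl)
      exact Q.pm_trans h1 (Q.pm_trans (Q.pm_mul_right h2) h3)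
  have hSone : (1 : Q n) ∈ S := Or.inl h1B
  have hSinv : ∀ p ∈ S, Q.conj n p ∈ S := by
    rintro p (hp | ⟨b, hb, rfl⟩)
    · exact Or.inl (hinvmem p hp)
    · exact Or.inr (himg _ b hb (Q.conj_sign n (Q.mul n b x)))
  have hxS : x ∈ S := Or.inr ⟨Q.one n, B.one_mem, Q.one_mul n x⟩
  have hBxS : B.carrier ∪ {x} ⊆ S := by
    rintro a (ha | rfl)
    · exact Or.inl ha
    · exact hxS
  have hsub1 : Q.closure n (B.carrier ∪ {x}) ⊆ S :=
    Set.sInter_subset_of_mem ⟨hBxS, hSone, hSmul, hSinv⟩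
  have hBc : B.carrier ⊆ Q.closure n (B.carrier ∪ {x}) := fun b hb =>
    Set.mem_sInter.2 fun t ht => ht.1 (Or.inl hb)
  have hxc : x ∈ Q.closure n (B.carrier ∪ {x}) :=
    Set.mem_sInter.2 fun t ht => ht.1 (Or.inr rfl)
  have hsub2 : S ⊆ Q.closure n (B.carrier ∪ {x}) := by
    rintro p (hp | ⟨b, hb, rfl⟩)
    · exact hBc hp
    · exact Set.mem_sInter.2 fun t ht =>
        ht.2.2.1 b (Set.mem_sInter.1 (hBc hb) t ht) x (Set.mem_sInter.1 hxc t ht)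
  rw [Set.Subset.antisymm hsub1 hsub2]
  have hdisj : Disjoint B.carrier ((fun b => Q.mul n b x) '' B.carrier) := by
    rw [Set.disjoint_left]
    rintro a ha ⟨c, hc, rfl⟩
    apply hx
    have hkey : Q.pm n x (Q.mul n (Q.conj n c) (Q.mul n c x)) := by
      have h1 := Q.assoc_pm n (Q.conj n c) c x
      rw [(Q.mul_conj n c).2, Q.one_mul] at h1
      exact h1
    exact hpm_mem x _ hkey (B.mul_mem (hinvmem c hc) ha)
  rw [hSdef, Set.ncard_union_eq hdisj (Set.toFinite _) (Set.toFinite _),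
    Set.ncard_image_of_injOn (fun a _ b _ h => Q.mul_right_cancel h)]
  omega
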